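/- For each 𝔟-scale S ⊆ [ℕ]^∞, the subspace S ∪ Fin of the Cantor space 𝒫(ℕ) is Hurewicz. -/

import Mathlib

open Set Filter Cardinal

namespace OmissionOfIntervals

/-- The Cantor space `𝒫(ℕ)`, identified with `ℕ → Bool` via characteristic functions,
with the product topology. -/
abbrev CantorSp : Type := ℕ → Bool

/-- `Fin`: the points of the Cantor space coding finite subsets of `ℕ`. -/
def CFin : Set CantorSp := {x | {n | x n = true}.Finite}

/-- `[ℕ]^∞`: the points of the Cantor space coding infinite subsets of `ℕ`. -/
def CInf : Set CantorSp := {x | {n | x n = true}.Infinite}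

/-- Increasing enumeration of the subset of `ℕ` coded by `x`. -/
noncomputable def enum (x : CantorSp) : ℕ → ℕ := Nat.nth (fun n => x n = true)

/-- `f ≤* g`: `f n ≤ g n` for all but finitely many `n`. -/
def LeStar (f g : ℕ → ℕ) : Prop := ∀ᶠ n in atTop, f n ≤ g n

/-- `a ⊆* b`: the set coded by `a` is almost contained in the set coded by `b`. -/
def SubStar (a b : CantorSp) : Prop := {n | a n = true ∧ ¬ b n = true}.Finite

/-- A dominating family in the Baire space. -/
def Dominating (S : Set (ℕ → ℕ)) : Prop := ∀ f : ℕ → ℕ, ∃ s ∈ S, LeStar f s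

/-- An unbounded (with respect to `≤*`) family in the Baire space. -/
def UnboundedFam (S : Set (ℕ → ℕ)) : Prop := ¬ ∃ g : ℕ → ℕ, ∀ s ∈ S, LeStar s g

/-- The dominating number `𝔡`. -/
noncomputable def frd : Cardinal := sInf {c | ∃ S : Set (ℕ → ℕ), Dominating S ∧ #S = c}

/-- The bounding number `𝔟`. -/
noncomputable def frb : Cardinal := sInf {c | ∃ S : Set (ℕ → ℕ), UnboundedFam S ∧ #S = c}

/-- A centered family of infinite subsets of `ℕ`: every finite subfamily has infinite
intersection. -/
def Centered (S : Set CantorSp) : Prop :=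
  S ⊆ CInf ∧ ∀ F : Finset CantorSp, ↑F ⊆ S → {n | ∀ x ∈ F, x n = true}.Infinite

/-- `S` has a pseudointersection: an infinite set almost contained in every member of `S`. -/
def HasPseudointersection (S : Set CantorSp) : Prop := ∃ a ∈ CInf, ∀ s ∈ S, SubStar a s

/-- The pseudointersection number `𝔭`. -/
noncomputable def frp : Cardinal :=
  sInf {c | ∃ S : Set CantorSp, Centered S ∧ ¬ HasPseudointersection S ∧ #S = c}

/-- `S ⊆ [ℕ]^∞` is `κ`-unbounded: `|S| ≥ κ` and for every `b : ℕ → ℕ` only `< κ` many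
members of `S` satisfy `s(n) ≤ b(n)` for all `n` (via increasing enumerations). -/
def KappaUnbounded (κ : Cardinal) (S : Set CantorSp) : Prop :=
  κ ≤ #S ∧ ∀ b : ℕ → ℕ, #{s ∈ S | ∀ n, enum s n ≤ b n} < κ

/-- `X` is `κ`-concentrated on `CFin`: `|X| ≥ κ` and `|X ∖ U| < κ` for every open
`U ⊇ CFin`. -/
def KappaConcentrated (κ : Cardinal) (X : Set CantorSp) : Prop :=
  κ ≤ #X ∧ ∀ U : Set CantorSp, IsOpen U → CFin ⊆ U → #(X \ U : Set CantorSp) < κ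

/-- An open cover of the space `X`. -/
def IsOpenCover {X : Type*} [TopologicalSpace X] (𝒰 : Set (Set X)) : Prop :=
  (∀ U ∈ 𝒰, IsOpen U) ∧ ⋃₀ 𝒰 = Set.univ

/-- A point-cofinite (γ-) open cover of the space `X`: an infinite family of open sets such
that every point belongs to all but finitely many members. -/
def PointCofiniteCover {X : Type*} [TopologicalSpace X] (𝒰 : Set (Set X)) : Prop :=
  (∀ U ∈ 𝒰, IsOpen U) ∧ 𝒰.Infinite ∧ ∀ x : X, {U ∈ 𝒰 | x ∉ U}.Finite

/-- An ω-cover of the space `X`: no member contains all of `X`, and every finite subset of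
`X` is contained in some member. -/
def OmegaCover {X : Type*} [TopologicalSpace X] (𝒰 : Set (Set X)) : Prop :=
  (∀ U ∈ 𝒰, IsOpen U) ∧ (∀ U ∈ 𝒰, U ≠ Set.univ) ∧ ∀ F : Finset X, ∃ U ∈ 𝒰, ↑F ⊆ U

/-- An ω-cover of the subset `Y` by open subsets of the ambient space `X`. -/
def OmegaCoverOf {X : Type*} [TopologicalSpace X] (𝒰 : Set (Set X)) (Y : Set X) : Prop :=
  (∀ U ∈ 𝒰, IsOpen U) ∧ (∀ U ∈ 𝒰, ¬ Y ⊆ U) ∧ ∀ F : Finset X, ↑F ⊆ Y → ∃ U ∈ 𝒰, ↑F ⊆ U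

/-- The Menger property. -/
def Menger (X : Type*) [TopologicalSpace X] : Prop :=
  ∀ 𝒰 : ℕ → Set (Set X), (∀ n, IsOpenCover (𝒰 n)) →
    ∃ 𝓕 : ℕ → Set (Set X), (∀ n, 𝓕 n ⊆ 𝒰 n ∧ (𝓕 n).Finite) ∧ ⋃₀ (⋃ n, 𝓕 n) = Set.univ

/-- The Hurewicz property. -/
def Hurewicz (X : Type*) [TopologicalSpace X] : Prop :=
  ∀ 𝒰 : ℕ → Set (Set X), (∀ n, IsOpenCover (𝒰 n)) →
    (∀ n, ¬ ∃ 𝓕 ⊆ 𝒰 n, 𝓕.Finite ∧ ⋃₀ 𝓕 = Set.univ) →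
    ∃ 𝓕 : ℕ → Set (Set X), (∀ n, 𝓕 n ⊆ 𝒰 n ∧ (𝓕 n).Finite) ∧
      ∀ x : X, ∀ᶠ n in atTop, x ∈ ⋃₀ 𝓕 n

/-- The property `S1(Γ,Γ)`. -/
def S1GammaGamma (X : Type*) [TopologicalSpace X] : Prop :=
  ∀ 𝒰 : ℕ → Set (Set X), (∀ n, PointCofiniteCover (𝒰 n)) →
    ∃ U : ℕ → Set X, (∀ n, U n ∈ 𝒰 n) ∧ ∀ x : X, ∀ᶠ n in atTop, x ∈ U n

/-- The property `S1(Γ,O)`. -/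
def S1GammaO (X : Type*) [TopologicalSpace X] : Prop :=
  ∀ 𝒰 : ℕ → Set (Set X), (∀ n, PointCofiniteCover (𝒰 n)) →
    ∃ U : ℕ → Set X, (∀ n, U n ∈ 𝒰 n) ∧ (⋃ n, U n) = Set.univ

/-- The property `S1(Ω,Γ)`. -/
def S1OmegaGamma (X : Type*) [TopologicalSpace X] : Prop :=
  ∀ 𝒰 : ℕ → Set (Set X), (∀ n, OmegaCover (𝒰 n)) →
    ∃ U : ℕ → Set X, (∀ n, U n ∈ 𝒰 n) ∧ ∀ x : X, ∀ᶠ n in atTop, x ∈ U n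

/-- `X` is an ω-γ set: every open ω-cover has a subfamily that is a point-cofinite cover. -/
def OmegaGammaSet (X : Type*) [TopologicalSpace X] : Prop :=
  ∀ 𝒰 : Set (Set X), OmegaCover 𝒰 → ∃ 𝒱 ⊆ 𝒰, PointCofiniteCover 𝒱

/-- The property `U_k(Γ,Γ)`. -/
def UkGammaGamma (k : ℕ) (X : Type*) [TopologicalSpace X] : Prop :=
  ∀ 𝒰 : ℕ → Set (Set X), (∀ n, PointCofiniteCover (𝒰 n)) →
    (∀ n, ¬ ∃ 𝓕 : Finset (Set X), ↑𝓕 ⊆ 𝒰 n ∧ 𝓕.card ≤ k ∧ ⋃₀ (↑𝓕 : Set (Set X)) = Set.univ) →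
    ∃ 𝓕 : ℕ → Finset (Set X), (∀ n, ↑(𝓕 n) ⊆ 𝒰 n ∧ (𝓕 n).card ≤ k) ∧
      ∀ x : X, ∀ᶠ n in atTop, x ∈ ⋃₀ ((𝓕 n : Finset (Set X)) : Set (Set X))

/-- The property `U_id(Γ,Γ)`. -/
def UidGammaGamma (X : Type*) [TopologicalSpace X] : Prop :=
  ∀ 𝒰 : ℕ → Set (Set X), (∀ n, PointCofiniteCover (𝒰 n)) →
    (∀ n, ¬ ∃ 𝓕 : Finset (Set X), ↑𝓕 ⊆ 𝒰 n ∧ ⋃₀ (↑𝓕 : Set (Set X)) = Set.univ) →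
    ∃ 𝓕 : ℕ → Finset (Set X), (∀ n, ↑(𝓕 n) ⊆ 𝒰 n ∧ (𝓕 n).card ≤ n) ∧
      ∀ x : X, ∀ᶠ n in atTop, x ∈ ⋃₀ ((𝓕 n : Finset (Set X)) : Set (Set X))

/-- The set of terms of an ordinal-indexed sequence, below the ordinal `o`. -/
def rangeBelow (s : Ordinal → CantorSp) (o : Ordinal) : Set CantorSp := {x | ∃ α < o, x = s α}

/-- `s`, restricted to ordinals below `frb.ord`, is a `𝔟`-scale: an unbounded,
`≤*`-increasing `𝔟`-sequence of infinite subsets of `ℕ`. -/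
def IsBScale (s : Ordinal → CantorSp) : Prop :=
  (∀ α < frb.ord, s α ∈ CInf) ∧
  UnboundedFam {f | ∃ α < frb.ord, f = enum (s α)} ∧
  ∀ α β : Ordinal, α < β → β < frb.ord → LeStar (enum (s α)) (enum (s β))

/-- `t`, restricted to ordinals below `κ.ord`, is a `κ`-tower:
`⊆*`-decreasing sequence of infinite subsets of `ℕ`. -/
def IsTower (κ : Cardinal) (t : Ordinal → CantorSp) : Prop :=
  (∀ α < κ.ord, t α ∈ CInf) ∧
  ∀ α β : Ordinal, α < β → β < κ.ord → SubStar (t β) (t α)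

/-- An unbounded `κ`-tower. -/
def IsUnboundedTower (κ : Cardinal) (t : Ordinal → CantorSp) : Prop :=
  IsTower κ t ∧ UnboundedFam {f | ∃ α < κ.ord, f = enum (t α)}

/-- `a ⊑ b`: for all but finitely many `n`, the interval `[b(n), b(n+1)]` contains at least
two elements of the set coded by `a`. -/
def SqSubset (a b : CantorSp) : Prop :=
  ∀ᶠ n in atTop,
    2 ≤ ((Finset.Icc (enum b n) (enum b (n + 1))).filter (fun k => a k = true)).card

/-- `s`, restricted to ordinals below `frb.ord`, is a `𝔟(⊑)`-scale. -/
def IsBSqScale (s : Ordinal → CantorSp) : Prop :=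
  (∀ α < frb.ord, s α ∈ CInf) ∧
  UnboundedFam {f | ∃ α < frb.ord, f = enum (s α)} ∧
  ∀ α β : Ordinal, α < β → β < frb.ord → SqSubset (s α) (s β)

lemma exists_bound_of_countable {S : Set (ℕ → ℕ)} (hS : S.Countable) :
    ∃ g : ℕ → ℕ, ∀ f ∈ S, LeStar f g := by
  rcases S.eq_empty_or_nonempty with h | h
  · exact ⟨id, by simp [h]⟩
  obtain ⟨e, he⟩ := hS.exists_eq_range h
  refine ⟨fun n => (Finset.range (n+1)).sup (fun i => e i n), ?_⟩
  rintro f hf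
  rw [he] at hf
  obtain ⟨i, rfl⟩ := hf
  refine eventually_atTop.2 ⟨i, fun n hn => ?_⟩
  exact Finset.le_sup (f := fun j => e j n) (Finset.mem_range.2 (Nat.lt_succ_of_le hn))

lemma unboundedFam_univ : UnboundedFam (Set.univ : Set (ℕ → ℕ)) := by
  rintro ⟨g, hg⟩
  have := hg (fun n => g n + 1) (mem_univ _)
  rcases eventually_atTop.1 this with ⟨N, hN⟩
  simpa using hN N le_rfl

lemma aleph0_lt_of_unbounded {S : Set (ℕ → ℕ)} (h : UnboundedFam S) : ℵ₀ < #S := by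
  by_contra hle
  push_neg at hle
  have hc : S.Countable := Set.countable_coe_iff.1 (Cardinal.mk_le_aleph0_iff.1 hle)
  exact h (exists_bound_of_countable hc)

lemma frb_mem : ∃ S : Set (ℕ → ℕ), UnboundedFam S ∧ #S = frb := by
  have hne : {c | ∃ S : Set (ℕ → ℕ), UnboundedFam S ∧ #S = c}.Nonempty :=
    ⟨_, Set.univ, unboundedFam_univ, rfl⟩
  exact csInf_mem hne

lemma aleph0_lt_frb : ℵ₀ < frb := by
  obtain ⟨S, hS, h⟩ := frb_mem
  rw [← h]; exact aleph0_lt_of_unbounded hS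

lemma exists_bound_of_card_lt {S : Set (ℕ → ℕ)} (h : #S < frb) :
    ∃ g : ℕ → ℕ, ∀ f ∈ S, LeStar f g := by
  by_contra hc
  have hmem : #↥S ∈ {c | ∃ S : Set (ℕ → ℕ), UnboundedFam S ∧ #S = c} := ⟨S, hc, rfl⟩
  exact absurd (csInf_le' hmem) (not_le.2 h)

lemma cfin_countable : CFin.Countable := by
  have hsub : CFin ⊆ Set.range (fun q : Finset ℕ => fun i => decide (i ∈ q)) := by
    intro x hx
    refine ⟨hx.toFinset, funext fun i => ?_⟩
    have hd : decide (i ∈ hx.toFinset) = decide (x i = true) :=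
      decide_eq_decide.2 (Set.Finite.mem_toFinset (hs := hx))
    simp only [hd]
    cases hxi : x i <;> simp [hxi]
  exact (Set.countable_range _).mono hsub

lemma exists_gap {x : CantorSp} (hx : x ∈ CInf) (m : ℕ → ℕ) (hm : StrictMono m) (j : ℕ)
    (hj : m (2*j+1) < enum x j) :
    ∃ t, j ≤ t ∧ t ≤ 2*j ∧ ∀ i, m t < i → i < m (t+1) → x i = false := by
  by_contra hcon
  push_neg at hcon
  have hcon' : ∀ t, ∃ i, j ≤ t → t ≤ 2*j → m t < i ∧ i < m (t+1) ∧ x i = true := by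
    intro t
    by_cases h1 : j ≤ t
    · by_cases h2 : t ≤ 2*j
      · obtain ⟨i, hi1, hi2, hi3⟩ := hcon t h1 h2
        exact ⟨i, fun _ _ => ⟨hi1, hi2, by simpa using hi3⟩⟩
      · exact ⟨0, fun _ h => absurd h h2⟩
    · exact ⟨0, fun h => absurd h h1⟩
  choose c hc using hcon'
  have hp : {i | x i = true}.Infinite := hx
  have hmap : ∀ t ∈ Finset.Icc j (2*j),
      Nat.count (fun i => x i = true) (c t) ∈ Finset.range j := by
    intro t ht
    rw [Finset.mem_Icc] at ht
    obtain ⟨h1, h2, h3⟩ := hc t ht.1 ht.2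
    rw [Finset.mem_range]
    by_contra hge
    push_neg at hge
    have hnth : Nat.nth (fun i => x i = true) (Nat.count (fun i => x i = true) (c t)) = c t :=
      Nat.nth_count h3
    have hlt : c t < Nat.nth (fun i => x i = true) j := by
      calc c t < m (t+1) := h2
      _ ≤ m (2*j+1) := hm.monotone (by omega)
      _ < enum x j := hj
    have : Nat.nth (fun i => x i = true) j ≤ c t := by
      rcases eq_or_lt_of_le hge with heq | hlt'
      · rw [← hnth, ← heq]
      · exact le_of_lt (by rw [← hnth]; exact (Nat.nth_lt_nth hp).2 hlt')
    omega
  have hcard : (Finset.range j).card < (Finset.Icc j (2*j)).card := by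
    rw [Finset.card_range, Nat.card_Icc]; omega
  obtain ⟨t, ht, t', ht', hne, heq⟩ :=
    Finset.exists_ne_map_eq_of_card_lt_of_maps_to hcard hmap
  rw [Finset.mem_Icc] at ht ht'
  obtain ⟨ha1, ha2, ha3⟩ := hc t ht.1 ht.2
  obtain ⟨hb1, hb2, hb3⟩ := hc t' ht'.1 ht'.2
  have hceq : c t = c t' := by
    have e1 := Nat.nth_count (p := fun i => x i = true) ha3
    have e2 := Nat.nth_count (p := fun i => x i = true) hb3
    rw [← e1, ← e2, heq]
  rcases hne.lt_or_gt with hlt | hlt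
  · have : m (t+1) ≤ m t' := hm.monotone (by omega)
    omega
  · have : m (t'+1) ≤ m t := hm.monotone (by omega)
    omega

/-- For each `𝔟`-scale `S`, the subspace `S ∪ Fin` of the Cantor space is
Hurewicz. -/
theorem stmt2 (s : Ordinal → CantorSp) (hs : IsBScale s) :
    Hurewicz ↥(rangeBelow s frb.ord ∪ CFin) := by
  classical
  obtain ⟨hinf, hunb, hmonoS⟩ := hs
  intro 𝒰 hcov _
  -- countable subcovers
  have hU : ∀ n : ℕ, ∃ U : ℕ → Set ↥(rangeBelow s frb.ord ∪ CFin),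
      (∀ m, U m ∈ 𝒰 n) ∧ (⋃ m, U m) = Set.univ := by
    intro n
    obtain ⟨T, hTc, hTsub, hTun⟩ := TopologicalSpace.isOpen_sUnion_countable (𝒰 n) (hcov n).1
    rw [(hcov n).2] at hTun
    have hXne : ((fun _ => false : CantorSp)) ∈ rangeBelow s frb.ord ∪ CFin := by
      refine Set.mem_union_right _ ?_
      show ({n | (false : Bool) = true} : Set ℕ).Finite
      simp
    have hTne : T.Nonempty := by
      rcases T.eq_empty_or_nonempty with h | h
      · exfalso
        have hmem : (⟨_, hXne⟩ : ↥(rangeBelow s frb.ord ∪ CFin)) ∈ ⋃₀ T := by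
          rw [hTun]; trivial
        rw [h] at hmem
        simpa using hmem
      · exact h
    obtain ⟨e, he⟩ := hTc.exists_eq_range hTne
    refine ⟨e, fun m => hTsub (he ▸ Set.mem_range_self m), ?_⟩
    rw [← Set.sUnion_range, ← he, hTun]
  choose U hUmem hUcov using hU
  -- index choice for each point
  have hfex : ∀ (x : ↥(rangeBelow s frb.ord ∪ CFin)) (n : ℕ), ∃ m, x ∈ U n m := by
    intro x n
    have : x ∈ ⋃ m, U n m := by rw [hUcov n]; trivial
    simpa using this
  choose f hf using hfex
  -- ambient open sets
  have hVex : ∀ n m, ∃ V : Set CantorSp, IsOpen V ∧ U n m = Subtype.val ⁻¹' V := by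
    intro n m
    obtain ⟨V, hV, hVe⟩ := isOpen_induced_iff.1 ((hcov n).1 _ (hUmem n m))
    exact ⟨V, hV, hVe.symm⟩
  choose V hVopen hVeq using hVex
  -- characteristic points of finite sets
  have hchi : ∀ q : Finset ℕ, (fun i => decide (i ∈ q)) ∈ rangeBelow s frb.ord ∪ CFin := by
    intro q
    refine Set.mem_union_right _ ?_
    exact (q.finite_toSet).subset (fun i hi => by simpa using hi)
  let χ : Finset ℕ → ↥(rangeBelow s frb.ord ∪ CFin) := fun q => ⟨fun i => decide (i ∈ q), hchi q⟩
  -- radii of stability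
  have hrex : ∀ (n : ℕ) (q : Finset ℕ), ∃ r : ℕ,
      ∀ y : CantorSp, (∀ i < r, y i = decide (i ∈ q)) → y ∈ V n (f (χ q) n) := by
    intro n q
    have hmemV : ((χ q : ↥(rangeBelow s frb.ord ∪ CFin)) : CantorSp) ∈ V n (f (χ q) n) := by
      have h1 := hf (χ q) n
      rw [hVeq n _] at h1
      exact h1
    obtain ⟨I, u, hu, hsub⟩ := isOpen_pi_iff.1 (hVopen n _) _ hmemV
    refine ⟨(I.sup id) + 1, fun y hy => hsub ?_⟩
    refine Set.mem_pi.2 (fun i hi => ?_)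
    have hiI : i ∈ I := hi
    have hyi : y i = decide (i ∈ q) :=
      hy i (Nat.lt_succ_of_le (Finset.le_sup (f := id) hiI))
    rw [hyi]
    exact (hu i hiI).2
  choose r hr using hrex
  -- absorption bounds
  let M : ℕ → ℕ → ℕ := fun n t => (Finset.range (t+1)).powerset.sup (fun q => f (χ q) n)
  let R : ℕ → ℕ → ℕ := fun n t => (Finset.range (t+1)).powerset.sup (fun q => r n q)
  have keyA : ∀ (x : ↥(rangeBelow s frb.ord ∪ CFin)) (n t : ℕ),
      (∀ i, t < i → i < R n t → (x : CantorSp) i = false) →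
      ∃ m, m ≤ M n t ∧ x ∈ U n m := by
    intro x n t hx
    set q : Finset ℕ := (Finset.range (t+1)).filter (fun i => (x : CantorSp) i = true) with hq
    have hqmem : q ∈ (Finset.range (t+1)).powerset :=
      Finset.mem_powerset.2 (Finset.filter_subset _ _)
    refine ⟨f (χ q) n, show f (χ q) n ≤ M n t from Finset.le_sup (f := fun q => f (χ q) n) hqmem, ?_⟩
    rw [hVeq n _]
    show (x : CantorSp) ∈ V n (f (χ q) n)
    apply hr n q
    intro i hi
    have hiR : i < R n t := lt_of_lt_of_le hi (Finset.le_sup (f := fun q => r n q) hqmem)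
    by_cases hit : i ≤ t
    · have hiff : (i ∈ q) ↔ ((x : CantorSp) i = true) := by
        simp [hq, Finset.mem_filter, Finset.mem_range, Nat.lt_succ_of_le hit]
      have hd : decide (i ∈ q) = decide ((x : CantorSp) i = true) := decide_eq_decide.2 hiff
      rw [hd]
      cases hxi : (x : CantorSp) i <;> simp [hxi]
    · push_neg at hit
      have h1 : (x : CantorSp) i = false := hx i hit hiR
      have h2 : i ∉ q := by
        intro hiq
        have := Finset.mem_range.1 (Finset.mem_powerset.1 hqmem hiq)
        omega
      simp [h1, h2]
  -- the interval endpoints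
  let g : ℕ → ℕ := fun t => max (t+1) ((Finset.range (t+1)).sup (fun n => R n t))
  have hgt : ∀ t, t < g t := fun t => lt_of_lt_of_le (Nat.lt_succ_self t) (le_max_left _ _)
  have hgR : ∀ n t, n ≤ t → R n t ≤ g t := fun n t hnt =>
    le_trans (Finset.le_sup (f := fun n => R n t) (Finset.mem_range.2 (Nat.lt_succ_of_le hnt)))
      (le_max_right _ _)
  let mseq : ℕ → ℕ := fun k => Nat.rec 0 (fun _ ih => g ih) k
  have hm0 : mseq 0 = 0 := rfl
  have hmsucc : ∀ k, mseq (k+1) = g (mseq k) := fun k => rfl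
  have hmmono : StrictMono mseq := strictMono_nat_of_lt_succ (fun k => by rw [hmsucc]; exact hgt _)
  have hmge : ∀ k, k ≤ mseq k := by
    intro k
    induction k with
    | zero => simp [hm0]
    | succ k ih =>
      have h1 := hgt (mseq k)
      rw [← hmsucc] at h1
      omega
  have keyA' : ∀ (x : ↥(rangeBelow s frb.ord ∪ CFin)) (n t : ℕ), n ≤ mseq t →
      (∀ i, mseq t < i → i < mseq (t+1) → (x : CantorSp) i = false) →
      ∃ m, m ≤ M n (mseq t) ∧ x ∈ U n m := by
    intro x n t hn hzero
    apply keyA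
    intro i h1 h2
    have hRle : R n (mseq t) ≤ mseq (t+1) := by
      rw [hmsucc]; exact hgR n (mseq t) hn
    exact hzero i h1 (lt_of_lt_of_le h2 hRle)
  -- the threshold ordinal δ
  let hfun : ℕ → ℕ := fun j => mseq (2*j+1)
  have hδex : ∃ α, α < frb.ord ∧ ¬ LeStar (enum (s α)) hfun := by
    by_contra hc
    push_neg at hc
    refine hunb ⟨hfun, ?_⟩
    rintro fnc ⟨α, hα, rfl⟩
    exact hc α hα
  obtain ⟨α₀, hα₀, hα₀n⟩ := hδex
  set Pset : Set Ordinal := {α | α < frb.ord ∧ ¬ LeStar (enum (s α)) hfun} with hPdef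
  have hPne : Pset.Nonempty := ⟨α₀, hα₀, hα₀n⟩
  let δ : Ordinal := WellFounded.min Ordinal.lt_wf Pset hPne
  have hδP : δ ∈ Pset := WellFounded.min_mem _ _ _
  have hδmin : ∀ β, β < δ → β < frb.ord → LeStar (enum (s β)) hfun := by
    intro β hβ hβo
    by_contra hcon
    exact WellFounded.not_lt_min Ordinal.lt_wf Pset (show β ∈ Pset from ⟨hβo, hcon⟩) hβ
  -- positions where s δ overshoots
  have hJ : ∀ K : ℕ, ∃ j, K ≤ j ∧ hfun j < enum (s δ) j := by
    intro K
    have h2 := hδP.2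
    rw [LeStar, Filter.not_eventually] at h2
    obtain ⟨j, hjK, hjlt⟩ := Filter.frequently_atTop.1 h2 K
    exact ⟨j, hjK, not_le.1 hjlt⟩
  choose Jf hJf1 hJf2 using hJ
  -- block indices
  let kk : ℕ → ℕ := fun n => @Nat.findGreatest (fun k => mseq k ≤ n) (fun k => Nat.decLe _ _) n
  have hkk2 : ∀ n, n < mseq (kk n + 1) := by
    intro n
    by_cases hc : kk n + 1 ≤ n
    · by_contra hcon
      exact @Nat.findGreatest_is_greatest (kk n + 1) (fun k => mseq k ≤ n) (fun k => Nat.decLe _ _) n (Nat.lt_succ_self _) hc (not_lt.1 hcon)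
    · push_neg at hc
      exact lt_of_lt_of_le hc (hmge _)
  have hkk3 : ∀ K n, mseq K ≤ n → K ≤ kk n :=
    fun K n hKn => @Nat.le_findGreatest K (fun k => mseq k ≤ n) (fun k => Nat.decLe _ _) n (le_trans (hmge K) hKn) hKn
  let jj : ℕ → ℕ := fun n => Jf (kk n + 1)
  have hjj1 : ∀ n, kk n + 1 ≤ jj n := fun n => hJf1 _
  have hjj2 : ∀ n, hfun (jj n) < enum (s δ) (jj n) := fun n => hJf2 _
  -- the small part
  set Small : Set ↥(rangeBelow s frb.ord ∪ CFin) :=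
    {x | (x : CantorSp) ∈ CFin} ∪ {x | ∃ β, β < δ ∧ (x : CantorSp) = s β} with hSmalldef
  have hS1 : #({x : ↥(rangeBelow s frb.ord ∪ CFin) | (x : CantorSp) ∈ CFin}) ≤ ℵ₀ := by
    have hc : ({x : ↥(rangeBelow s frb.ord ∪ CFin) | (x : CantorSp) ∈ CFin}).Countable :=
      (cfin_countable.preimage Subtype.val_injective)
    exact Cardinal.mk_le_aleph0_iff.2 (Set.countable_coe_iff.2 hc)
  have hS2 : #({x : ↥(rangeBelow s frb.ord ∪ CFin) | ∃ β, β < δ ∧ (x : CantorSp) = s β})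
      ≤ δ.card := by
    rw [← Cardinal.mk_toType]
    have hsel : ∀ x : ↥({x : ↥(rangeBelow s frb.ord ∪ CFin) | ∃ β, β < δ ∧ (x : CantorSp) = s β}),
        ∃ β, β < δ ∧ ((x : ↥(rangeBelow s frb.ord ∪ CFin)) : CantorSp) = s β := fun x => x.2
    choose β hβ1 hβ2 using hsel
    refine Cardinal.mk_le_of_injective (f := fun x => Ordinal.ToType.mk (o := δ) ⟨β x, hβ1 x⟩) ?_
    intro a b hab
    have hβeq : β a = β b := Subtype.ext_iff.1 ((Ordinal.ToType.mk (o := δ)).injective hab)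
    apply Subtype.ext
    apply Subtype.ext
    rw [hβ2 a, hβ2 b, hβeq]
  have hSmallCard : #Small < frb := by
    calc #Small ≤ _ + _ := Cardinal.mk_union_le _ _
    _ ≤ ℵ₀ + δ.card := add_le_add hS1 hS2
    _ < frb := Cardinal.add_lt_of_lt aleph0_lt_frb.le aleph0_lt_frb (Cardinal.lt_ord.1 hδP.1)
  obtain ⟨E, hE⟩ : ∃ E : ℕ → ℕ, ∀ x ∈ Small, LeStar (f x) E := by
    obtain ⟨E, hE⟩ := exists_bound_of_card_lt
      (lt_of_le_of_lt (Cardinal.mk_image_le (f := fun x => f x) (s := Small)) hSmallCard)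
    exact ⟨E, fun x hx => hE _ (Set.mem_image_of_mem _ hx)⟩
  -- the selection
  let W : ℕ → ℕ := fun n => (Finset.Icc (jj n) (2 * jj n)).sup (fun t => M n (mseq t))
  let B : ℕ → ℕ := fun n => max (E n) (W n)
  refine ⟨fun n => (fun m => U n m) '' (Set.Iic (B n)), fun n => ⟨?_, ?_⟩, ?_⟩
  · rintro _ ⟨m, _, rfl⟩; exact hUmem n m
  · exact (Set.finite_Iic _).image _
  · -- coverage
    have smallcov : ∀ x ∈ Small, ∀ᶠ n in atTop, x ∈ ⋃₀ ((fun m => U n m) '' (Set.Iic (B n))) := by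
      intro x hx
      refine (hE x hx).mono (fun n hn => ?_)
      exact ⟨U n (f x n), ⟨f x n, Set.mem_Iic.2 (le_trans hn (le_max_left _ _)), rfl⟩, hf x n⟩
    intro x
    rcases x.2 with hx | hx
    · obtain ⟨α, hαlt, hxα⟩ := hx
      rcases lt_or_ge α δ with hsm | hbig
      · exact smallcov x (Set.mem_union_right _ ⟨α, hsm, hxα⟩)
      · -- big part
        have hNα : ∃ N, ∀ j, N ≤ j → enum (s δ) j ≤ enum (s α) j := by
          rcases eq_or_lt_of_le hbig with heq | hlt
          · exact ⟨0, fun j _ => by rw [heq]⟩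
          · obtain ⟨N, hN⟩ := eventually_atTop.1 (hmonoS δ α hlt hαlt)
            exact ⟨N, hN⟩
        obtain ⟨N, hN⟩ := hNα
        rw [Filter.eventually_atTop]
        refine ⟨mseq N, fun n hn => ?_⟩
        have hkN : N ≤ kk n := hkk3 N n hn
        have hjN : N ≤ jj n := le_trans (by omega) (hjj1 n)
        have hxinf : (x : CantorSp) ∈ CInf := by rw [hxα]; exact hinf α hαlt
        have hjlt : mseq (2 * jj n + 1) < enum (x : CantorSp) (jj n) := by
          calc mseq (2 * jj n + 1) = hfun (jj n) := rfl
          _ < enum (s δ) (jj n) := hjj2 n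
          _ ≤ enum (s α) (jj n) := hN _ hjN
          _ = enum (x : CantorSp) (jj n) := by rw [hxα]
        obtain ⟨t, ht1, ht2, ht3⟩ := exists_gap hxinf mseq hmmono (jj n) hjlt
        have hnle : n ≤ mseq t :=
          le_trans (le_of_lt (hkk2 n)) (hmmono.monotone (le_trans (hjj1 n) ht1))
        obtain ⟨m, hm1, hm2⟩ := keyA' x n t hnle ht3
        refine ⟨U n m, ⟨m, Set.mem_Iic.2 ?_, rfl⟩, hm2⟩
        have hMW : M n (mseq t) ≤ W n :=
          Finset.le_sup (f := fun t => M n (mseq t)) (Finset.mem_Icc.2 ⟨ht1, ht2⟩)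
        exact le_trans hm1 (le_trans hMW (le_max_right _ _))
    · exact smallcov x (Set.mem_union_left _ hx)
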